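/- Every natural distance metric on subsets of a finite set A is majority-concentric: for every k-subset U ⊆ A, every a ∈ U and b ∉ U, and every threshold value t ≥ 0, the number of subsets S ⊆ A with a ∈ S, b ∉ S, and d(U,S) ≤ t is at least the number of subsets S ⊆ A with b ∈ S, a ∉ S, and d(U,S) ≤ t. -/

import Mathlib

/-- `d` is a distance metric on subsets of the finite set of alternatives. -/
def IsMetric {α : Type*} (d : Finset α → Finset α → ℝ) : Prop :=
  (∀ X Y, 0 ≤ d X Y) ∧ (∀ X Y, d X Y = 0 ↔ X = Y) ∧
  (∀ X Y, d X Y = d Y X) ∧ (∀ X Y Z, d X Z ≤ d X Y + d Y Z)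

/-- `d` is natural: equal-sized sets sharing more alternatives with `S` are not farther from `S`. -/
def IsNatural {α : Type*} [DecidableEq α] (d : Finset α → Finset α → ℝ) : Prop :=
  ∀ U V S : Finset α, U.card = V.card → (V ∩ S).card < (U ∩ S).card → d U S ≤ d V S

theorem stmt6 {α : Type*} [Fintype α] [DecidableEq α] (d : Finset α → Finset α → ℝ)
    (hmetric : IsMetric d) (hnat : IsNatural d) :
    -- majority-concentricity
    ∀ (U : Finset α) (a b : α), a ∈ U → b ∉ U → ∀ t : ℝ, 0 ≤ t →
      {S : Finset α | b ∈ S ∧ a ∉ S ∧ d U S ≤ t}.ncard ≤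
        {S : Finset α | a ∈ S ∧ b ∉ S ∧ d U S ≤ t}.ncard := by
  intro U a b ha hb t ht
  obtain ⟨hnn, hzero, hsymm, htri⟩ := hmetric
  have hab : a ≠ b := fun h => hb (h ▸ ha)
  apply Set.ncard_le_ncard_of_injOn (fun S => insert a (S.erase b))
  · rintro S ⟨hbS, haS, hdS⟩
    have hbS' : b ∉ insert a (S.erase b) := by
      simp [Finset.mem_erase]
      exact fun h => absurd h.symm hab
    refine ⟨Finset.mem_insert_self _ _, hbS', ?_⟩
    have hcard : (insert a (S.erase b)).card = S.card := by
      rw [Finset.card_insert_of_notMem (by simp [haS]), Finset.card_erase_of_mem hbS]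
      have : 0 < S.card := Finset.card_pos.mpr ⟨b, hbS⟩
      omega
    have hint : (S ∩ U).card < ((insert a (S.erase b)) ∩ U).card := by
      have h1 : (insert a (S.erase b)) ∩ U = insert a (S ∩ U) := by
        ext x
        simp only [Finset.mem_inter, Finset.mem_insert, Finset.mem_erase]
        constructor
        · rintro ⟨h | ⟨hx, hxS⟩, hxU⟩
          · exact Or.inl h
          · exact Or.inr ⟨hxS, hxU⟩
        · rintro (rfl | ⟨hxS, hxU⟩)
          · exact ⟨Or.inl rfl, ha⟩
          · exact ⟨Or.inr ⟨fun h => hb (h ▸ hxU), hxS⟩, hxU⟩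
      rw [h1, Finset.card_insert_of_notMem (by simp [haS])]
      omega
    have := hnat (insert a (S.erase b)) S U (by omega) hint
    calc d U (insert a (S.erase b)) = d (insert a (S.erase b)) U := hsymm _ _
      _ ≤ d S U := this
      _ = d U S := hsymm _ _
      _ ≤ t := hdS
  · rintro S ⟨hbS, haS, -⟩ T ⟨hbT, haT, -⟩ hST
    have : S.erase b = T.erase b := by
      have := congrArg (·.erase a) hST
      simpa [Finset.erase_insert (by simp [haS, hab] : a ∉ S.erase b),
        Finset.erase_insert (by simp [haT, hab] : a ∉ T.erase b)] using this
    ext x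
    by_cases hx : x = b
    · simp [hx, hbS, hbT]
    · constructor <;> intro h
      · have : x ∈ S.erase b := Finset.mem_erase.mpr ⟨hx, h⟩
        rw [‹S.erase b = T.erase b›] at this
        exact (Finset.mem_erase.mp this).2
      · have : x ∈ T.erase b := Finset.mem_erase.mpr ⟨hx, h⟩
        rw [← ‹S.erase b = T.erase b›] at this
        exact (Finset.mem_erase.mp this).2
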